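/- Every graph G in the class 𝒢 on n vertices satisfies α(G) = (n+1)/3; in particular n ≡ 2 (mod 3). -/

import Mathlib

open SimpleGraph

/-- The independence number of a graph: the largest size of a set of pairwise
non-adjacent vertices. -/
noncomputable def alphaNum {V : Type*} (G : SimpleGraph V) : ℕ :=
  sSup {n | ∃ s : Finset V, ((s : Set V).Pairwise fun a b => ¬ G.Adj a b) ∧ s.card = n}

/-- A path `x1 v1 v2 x2` whose interior vertices `v1, v2` have degree two,
suitable for a path–diamond replacement. -/
def IsReplacablePath {U : Type*} (G1 : SimpleGraph U) (x1 v1 v2 x2 : U) : Prop :=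
  [x1, v1, v2, x2].Nodup ∧
  G1.neighborSet v1 = {x1, v2} ∧ G1.neighborSet v2 = {v1, x2}

/-- The result of a path–diamond replacement: delete `v1, v2` and add a new 5-cycle
`u1 z1 z2 u2 w` (encoded as `Fin 5` in this cyclic order) together with the edges
`x1u1`, `x1u2` and `x2w`. -/
def replGraph {U : Type*} (G1 : SimpleGraph U) (x1 v1 v2 x2 : U) :
    SimpleGraph ({u : U // u ≠ v1 ∧ u ≠ v2} ⊕ Fin 5) :=
  SimpleGraph.fromRel fun a b =>
    match a, b with
    | .inl a, .inl b => G1.Adj a.1 b.1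
    | .inl a, .inr i => (a.1 = x1 ∧ (i = 0 ∨ i = 3)) ∨ (a.1 = x2 ∧ i = 4)
    | .inr i, .inr j => (i, j) ∈ [((0 : Fin 5), (1 : Fin 5)), (1, 2), (2, 3), (3, 4), (4, 0)]
    | _, _ => False

/-- The class 𝒢: the path on two vertices, the 5-cycle, and all graphs obtained from
the 5-cycle by repeated path–diamond replacements (all up to isomorphism). -/
inductive InClassG : ∀ {V : Type}, SimpleGraph V → Prop
  | p2 {V : Type} (G : SimpleGraph V) : Nonempty (G ≃g SimpleGraph.pathGraph 2) → InClassG G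
  | c5 {V : Type} (G : SimpleGraph V) : Nonempty (G ≃g SimpleGraph.cycleGraph 5) → InClassG G
  | repl {U V : Type} (G1 : SimpleGraph U) (G : SimpleGraph V) (x1 v1 v2 x2 : U) :
      InClassG G1 → IsReplacablePath G1 x1 v1 v2 x2 →
      Nonempty (G ≃g replGraph G1 x1 v1 v2 x2) → InClassG G


def IndepIn {V : Type*} (G : SimpleGraph V) (s : Finset V) : Prop :=
  (s : Set V).Pairwise fun a b => ¬ G.Adj a b

lemma alphaSet_nonempty {V : Type*} (G : SimpleGraph V) :
    {n | ∃ s : Finset V, IndepIn G s ∧ s.card = n}.Nonempty :=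
  ⟨0, ∅, by simp [IndepIn], by simp⟩

lemma alphaSet_bdd {V : Type*} [Finite V] (G : SimpleGraph V) :
    BddAbove {n | ∃ s : Finset V, IndepIn G s ∧ s.card = n} := by
  have := Fintype.ofFinite V
  exact ⟨Fintype.card V, fun n ⟨s, _, hc⟩ => hc ▸ Finset.card_le_card (Finset.subset_univ s)⟩

lemma le_alphaNum {V : Type*} [Finite V] (G : SimpleGraph V) (s : Finset V)
    (hs : IndepIn G s) : s.card ≤ alphaNum G :=
  le_csSup (alphaSet_bdd G) ⟨s, hs, rfl⟩

lemma alphaNum_le {V : Type*} (G : SimpleGraph V) (k : ℕ)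
    (h : ∀ s : Finset V, IndepIn G s → s.card ≤ k) : alphaNum G ≤ k :=
  csSup_le (alphaSet_nonempty G) (fun n ⟨s, hs, hc⟩ => hc ▸ h s hs)

lemma exists_max_indep {V : Type*} [Finite V] (G : SimpleGraph V) :
    ∃ s : Finset V, IndepIn G s ∧ s.card = alphaNum G :=
  Nat.sSup_mem (alphaSet_nonempty G) (alphaSet_bdd G)

lemma alphaNum_congr {V W : Type*} [Finite W] {G : SimpleGraph V} {H : SimpleGraph W}
    (e : G ≃g H) : alphaNum G = alphaNum H := by
  have : Finite V := Finite.of_equiv W e.toEquiv.symm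
  apply le_antisymm
  · apply alphaNum_le
    intro s hs
    rw [← Finset.card_map e.toEquiv.toEmbedding]
    apply le_alphaNum
    intro a ha b hb hab hadj
    simp only [Finset.coe_map, Set.mem_image, Finset.mem_coe] at ha hb
    obtain ⟨a', ha', rfl⟩ := ha
    obtain ⟨b', hb', rfl⟩ := hb
    exact hs ha' hb' (fun h => hab (by rw [h])) (e.map_adj_iff.mp hadj)
  · apply alphaNum_le
    intro s hs
    rw [← Finset.card_map e.symm.toEquiv.toEmbedding]
    apply le_alphaNum
    intro a ha b hb hab hadj
    simp only [Finset.coe_map, Set.mem_image, Finset.mem_coe] at ha hb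
    obtain ⟨a', ha', rfl⟩ := ha
    obtain ⟨b', hb', rfl⟩ := hb
    exact hs ha' hb' (fun h => hab (by rw [h])) (e.symm.map_adj_iff.mp hadj)

lemma indepIn_iff {V : Type*} (G : SimpleGraph V) (s : Finset V) :
    IndepIn G s ↔ ∀ a ∈ s, ∀ b ∈ s, ¬ G.Adj a b := by
  constructor
  · intro h a ha b hb hadj
    rcases eq_or_ne a b with rfl | hne
    · exact G.irrefl hadj
    · exact h ha hb hne hadj
  · intro h a ha b hb _ hadj
    exact h a ha b hb hadj

lemma alpha_p2 : alphaNum (pathGraph 2) = 1 := by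
  apply le_antisymm
  · apply alphaNum_le
    intro s hs
    rw [indepIn_iff] at hs
    simp only [pathGraph_adj] at hs
    revert hs; revert s
    decide
  · have h := le_alphaNum (pathGraph 2) {0} ?_
    · simpa using h
    · rw [indepIn_iff]
      intro a ha b hb
      simp only [Finset.mem_singleton] at ha hb
      subst ha; subst hb
      simp [pathGraph_adj]

lemma alpha_c5 : alphaNum (cycleGraph 5) = 2 := by
  apply le_antisymm
  · apply alphaNum_le
    intro s hs
    rw [indepIn_iff] at hs
    revert hs; revert s
    decide
  · have h := le_alphaNum (cycleGraph 5) {0, 2} ?_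
    · simpa using h
    · rw [indepIn_iff]
      decide

section Repl
variable {U : Type} (G1 : SimpleGraph U) (x1 v1 v2 x2 : U)

lemma repl_adj_ll (a b : {u : U // u ≠ v1 ∧ u ≠ v2}) :
    (replGraph G1 x1 v1 v2 x2).Adj (.inl a) (.inl b) ↔ G1.Adj a.1 b.1 := by
  simp only [replGraph, fromRel_adj]
  constructor
  · rintro ⟨hne, h | h⟩
    · exact h
    · exact h.symm
  · intro h
    exact ⟨by simp [Subtype.ext_iff.symm]; intro he; exact G1.ne_of_adj h (by rw [he]), Or.inl h⟩

lemma repl_adj_lr (a : {u : U // u ≠ v1 ∧ u ≠ v2}) (i : Fin 5) :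
    (replGraph G1 x1 v1 v2 x2).Adj (.inl a) (.inr i) ↔
      (a.1 = x1 ∧ (i = 0 ∨ i = 3)) ∨ (a.1 = x2 ∧ i = 4) := by
  simp only [replGraph, fromRel_adj]
  constructor
  · rintro ⟨_, h | h⟩
    · exact h
    · exact h.elim
  · intro h
    exact ⟨by simp, Or.inl h⟩

lemma repl_adj_rr (i j : Fin 5) :
    (replGraph G1 x1 v1 v2 x2).Adj (.inr i) (.inr j) ↔ i ≠ j ∧
      ((i, j) ∈ [((0 : Fin 5), (1 : Fin 5)), (1, 2), (2, 3), (3, 4), (4, 0)] ∨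
       (j, i) ∈ [((0 : Fin 5), (1 : Fin 5)), (1, 2), (2, 3), (3, 4), (4, 0)]) := by
  simp only [replGraph, fromRel_adj]
  constructor
  · rintro ⟨hne, h⟩
    exact ⟨fun he => hne (by rw [he]), h⟩
  · rintro ⟨hne, h⟩
    exact ⟨fun he => hne (Sum.inr.inj he), h⟩

open Classical in
noncomputable def replEquiv (h12 : v1 ≠ v2) : U ≃ ({u : U // u ≠ v1 ∧ u ≠ v2} ⊕ Fin 2) where
  toFun u := if h1 : u = v1 then .inr 0 else if h2 : u = v2 then .inr 1 else .inl ⟨u, h1, h2⟩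
  invFun w := match w with
    | .inl a => a.1
    | .inr 0 => v1
    | .inr 1 => v2
  left_inv u := by
    by_cases h1 : u = v1
    · simp [h1]
    · by_cases h2 : u = v2 <;> simp [h1, h2, Ne.symm h12]
  right_inv w := by
    match w with
    | .inl a => simp [a.2.1, a.2.2]
    | .inr 0 => simp
    | .inr 1 => simp [h12, Ne.symm h12]

lemma card_repl [Finite U] (h12 : v1 ≠ v2) :
    Nat.card ({u : U // u ≠ v1 ∧ u ≠ v2} ⊕ Fin 5) = Nat.card U + 3 := by
  have h1 : Nat.card U = Nat.card ({u : U // u ≠ v1 ∧ u ≠ v2} ⊕ Fin 2) :=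
    Nat.card_congr (replEquiv v1 v2 h12)
  have hf : Finite {u : U // u ≠ v1 ∧ u ≠ v2} := Subtype.finite
  rw [Nat.card_sum] at h1 ⊢
  simp only [Nat.card_eq_fintype_card, Fintype.card_fin] at h1 ⊢
  omega

end Repl

lemma indep_subset {V : Type*} {G : SimpleGraph V} {s t : Finset V}
    (h : IndepIn G s) (hts : t ⊆ s) : IndepIn G t :=
  Set.Pairwise.mono (by exact_mod_cast hts) h

section Repl2
variable {U : Type} (G1 : SimpleGraph U) (x1 v1 v2 x2 : U)

lemma lift_indep (S' : Finset U) (hS' : IndepIn G1 S')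
    (h1 : v1 ∉ S') (h2 : v2 ∉ S') (P : Finset (Fin 5))
    (hP : ∀ i ∈ P, ∀ j ∈ P, ¬ (replGraph G1 x1 v1 v2 x2).Adj (.inr i) (.inr j))
    (hPx : ∀ u ∈ S', ∀ i ∈ P, ¬((u = x1 ∧ (i = 0 ∨ i = 3)) ∨ (u = x2 ∧ i = 4))) :
    ∃ T : Finset ({u : U // u ≠ v1 ∧ u ≠ v2} ⊕ Fin 5),
      IndepIn (replGraph G1 x1 v1 v2 x2) T ∧ T.card = S'.card + P.card := by
  classical
  have hinj : Function.Injective (fun u : {x // x ∈ S'} =>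
      (Sum.inl ⟨u.1, fun h => h1 (h ▸ u.2), fun h => h2 (h ▸ u.2)⟩ :
        {u : U // u ≠ v1 ∧ u ≠ v2} ⊕ Fin 5)) := by
    intro a b hab
    simp only [Sum.inl.injEq, Subtype.mk.injEq] at hab
    exact Subtype.ext hab
  refine ⟨S'.attach.map ⟨_, hinj⟩ ∪ P.map ⟨Sum.inr, Sum.inr_injective⟩, ?_, ?_⟩
  · rw [indepIn_iff]
    intro w hw w' hw'
    simp only [Finset.mem_union, Finset.mem_map, Finset.mem_attach, true_and,
      Function.Embedding.coeFn_mk, Subtype.exists] at hw hw'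
    rcases hw with ⟨u, hu, rfl⟩ | ⟨i, hi, rfl⟩ <;>
      rcases hw' with ⟨u', hu', rfl⟩ | ⟨i', hi', rfl⟩
    · rw [repl_adj_ll]
      exact (indepIn_iff _ _).mp hS' u hu u' hu'
    · rw [repl_adj_lr]
      exact hPx u hu i' hi'
    · intro hadj
      rw [adj_comm, repl_adj_lr] at hadj
      exact hPx u' hu' i hi hadj
    · exact hP i hi i' hi'
  · rw [Finset.card_union_of_disjoint, Finset.card_map, Finset.card_map, Finset.card_attach]
    rw [Finset.disjoint_left]
    rintro w hw hw'
    simp only [Finset.mem_map, Finset.mem_attach, true_and,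
      Function.Embedding.coeFn_mk, Subtype.exists] at hw hw'
    obtain ⟨u, hu, rfl⟩ := hw
    obtain ⟨i, hi, h⟩ := hw'
    cases h

variable {G1 x1 v1 v2 x2} in
lemma adj_v1 (h : IsReplacablePath G1 x1 v1 v2 x2) (y : U) :
    G1.Adj v1 y ↔ y = x1 ∨ y = v2 := by
  rw [← SimpleGraph.mem_neighborSet, h.2.1]
  simp

variable {G1 x1 v1 v2 x2} in
lemma adj_v2 (h : IsReplacablePath G1 x1 v1 v2 x2) (y : U) :
    G1.Adj v2 y ↔ y = v1 ∨ y = x2 := by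
  rw [← SimpleGraph.mem_neighborSet, h.2.2]
  simp

variable {G1 x1 v1 v2 x2} in
lemma repl_lower [Finite U] (h : IsReplacablePath G1 x1 v1 v2 x2) :
    alphaNum G1 + 1 ≤ alphaNum (replGraph G1 x1 v1 v2 x2) := by
  classical
  obtain ⟨S, hS, hcard⟩ := exists_max_indep G1
  have hSiff := (indepIn_iff _ _).mp hS
  have hv12 : v1 ≠ v2 := by
    have := h.1; simp at this; tauto
  by_cases hv1 : v1 ∈ S
  · -- use S.erase v1 with P = {0, 2}
    have hx1 : x1 ∉ S := fun hx => hSiff v1 hv1 x1 hx ((adj_v1 h x1).mpr (Or.inl rfl))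
    have hv2 : v2 ∉ S := fun hx => hSiff v1 hv1 v2 hx ((adj_v1 h v2).mpr (Or.inr rfl))
    obtain ⟨T, hT, hTc⟩ := lift_indep G1 x1 v1 v2 x2 (S.erase v1)
      (indep_subset hS (Finset.erase_subset _ _))
      (Finset.notMem_erase _ _)
      (fun hx => hv2 (Finset.mem_of_mem_erase hx))
      ({0, 2})
      (by
        intro i hi j hj
        simp only [Finset.mem_insert, Finset.mem_singleton] at hi hj
        rw [repl_adj_rr]
        rcases hi with rfl | rfl <;> rcases hj with rfl | rfl <;> decide)
      (by
        rintro u hu i hi (⟨rfl, _⟩ | ⟨rfl, rfl⟩)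
        · exact hx1 (Finset.mem_of_mem_erase hu)
        · simp at hi)
    have := le_alphaNum _ T hT
    rw [hTc, Finset.card_erase_of_mem hv1] at this
    have hS1 : 1 ≤ S.card := Finset.card_pos.mpr ⟨v1, hv1⟩
    have hc2 : ({0, 2} : Finset (Fin 5)).card = 2 := by decide
    rw [hc2] at this
    omega
  · by_cases hv2 : v2 ∈ S
    · have hx2 : x2 ∉ S := fun hx => hSiff v2 hv2 x2 hx ((adj_v2 h x2).mpr (Or.inr rfl))
      obtain ⟨T, hT, hTc⟩ := lift_indep G1 x1 v1 v2 x2 (S.erase v2)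
        (indep_subset hS (Finset.erase_subset _ _))
        (fun hx => hv1 (Finset.mem_of_mem_erase hx))
        (Finset.notMem_erase _ _)
        ({1, 4})
        (by
          intro i hi j hj
          simp only [Finset.mem_insert, Finset.mem_singleton] at hi hj
          rw [repl_adj_rr]
          rcases hi with rfl | rfl <;> rcases hj with rfl | rfl <;> decide)
        (by
          rintro u hu i hi (⟨rfl, hi03⟩ | ⟨rfl, rfl⟩)
          · simp only [Finset.mem_insert, Finset.mem_singleton] at hi
            rcases hi with rfl | rfl <;> simp at hi03
          · exact hx2 (Finset.mem_of_mem_erase hu))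
      have := le_alphaNum _ T hT
      rw [hTc, Finset.card_erase_of_mem hv2] at this
      have hS1 : 1 ≤ S.card := Finset.card_pos.mpr ⟨v2, hv2⟩
      have hc2 : ({1, 4} : Finset (Fin 5)).card = 2 := by decide
      rw [hc2] at this
      omega
    · obtain ⟨T, hT, hTc⟩ := lift_indep G1 x1 v1 v2 x2 S hS hv1 hv2 ({1})
        (by
          intro i hi j hj
          simp only [Finset.mem_singleton] at hi hj
          subst hi; subst hj
          rw [repl_adj_rr]; decide)
        (by
          rintro u hu i hi (⟨rfl, hi03⟩ | ⟨rfl, rfl⟩)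
          · simp only [Finset.mem_singleton] at hi
            subst hi; simp at hi03
          · simp at hi)
      have := le_alphaNum _ T hT
      rw [hTc] at this
      simp only [Finset.card_singleton] at this
      omega

end Repl2

lemma cyc5_bound : ∀ P : Finset (Fin 5), (∀ i ∈ P, ∀ j ∈ P, ¬(i ≠ j ∧
    ((i, j) ∈ [((0 : Fin 5), (1 : Fin 5)), (1, 2), (2, 3), (3, 4), (4, 0)] ∨
     (j, i) ∈ [((0 : Fin 5), (1 : Fin 5)), (1, 2), (2, 3), (3, 4), (4, 0)]))) →
    P.card ≤ 2 := by decide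

lemma cyc5_mid : ∀ i j : Fin 5, i ≠ 0 → i ≠ 3 → i ≠ 4 → j ≠ 0 → j ≠ 3 → j ≠ 4 → i ≠ j →
    (i ≠ j ∧ ((i, j) ∈ [((0 : Fin 5), (1 : Fin 5)), (1, 2), (2, 3), (3, 4), (4, 0)] ∨
     (j, i) ∈ [((0 : Fin 5), (1 : Fin 5)), (1, 2), (2, 3), (3, 4), (4, 0)])) := by
  intro i j; fin_cases i <;> fin_cases j <;> decide

section Repl3
variable {U : Type} {G1 : SimpleGraph U} {x1 v1 v2 x2 : U}

lemma repl_upper [Finite U] (h : IsReplacablePath G1 x1 v1 v2 x2) :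
    alphaNum (replGraph G1 x1 v1 v2 x2) ≤ alphaNum G1 + 1 := by
  classical
  apply alphaNum_le
  intro T hT
  have hTiff := (indepIn_iff _ _).mp hT
  set Tl : Finset ({u : U // u ≠ v1 ∧ u ≠ v2} ⊕ Fin 5) := T.filter (fun w => w.isLeft) with hTl
  set Tr : Finset ({u : U // u ≠ v1 ∧ u ≠ v2} ⊕ Fin 5) := T.filter (fun w => ¬ w.isLeft) with hTr
  have hsplit : Tl.card + Tr.card = T.card :=
    Finset.card_filter_add_card_filter_not _
  set S0 : Finset U := Tl.image (Sum.elim Subtype.val (fun _ => v1)) with hS0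
  -- characterize membership in S0
  have memS0 : ∀ u ∈ S0, ∃ a : {u : U // u ≠ v1 ∧ u ≠ v2}, a.1 = u ∧ Sum.inl a ∈ T := by
    intro u hu
    simp only [hS0, Finset.mem_image, hTl, Finset.mem_filter] at hu
    obtain ⟨w, ⟨hwT, hwL⟩, hwu⟩ := hu
    rcases w with a | i
    · exact ⟨a, hwu, hwT⟩
    · simp at hwL
  have cardS0 : S0.card = Tl.card := by
    apply Finset.card_image_of_injOn
    intro a ha b hb hab
    simp only [hTl, Finset.mem_filter] at ha hb
    rcases a with a | i
    · rcases b with b | j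
      · exact congrArg Sum.inl (Subtype.ext hab)
      · simp at hb
    · simp at ha
  have hS0v1 : v1 ∉ S0 := by
    intro hu
    obtain ⟨a, ha, _⟩ := memS0 v1 hu
    exact a.2.1 ha
  have hS0v2 : v2 ∉ S0 := by
    intro hu
    obtain ⟨a, ha, _⟩ := memS0 v2 hu
    exact a.2.2 ha
  have hS0indep : IndepIn G1 S0 := by
    rw [indepIn_iff]
    intro u hu u' hu' hadj
    obtain ⟨a, ha, haT⟩ := memS0 u hu
    obtain ⟨a', ha', ha'T⟩ := memS0 u' hu'
    exact hTiff _ haT _ ha'T ((repl_adj_ll G1 x1 v1 v2 x2 a a').mpr (ha ▸ ha' ▸ hadj))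
  set P : Finset (Fin 5) := Tr.image (Sum.elim (fun _ => (0 : Fin 5)) id) with hP
  have memP : ∀ i ∈ P, Sum.inr i ∈ T := by
    intro i hi
    simp only [hP, Finset.mem_image, hTr, Finset.mem_filter] at hi
    obtain ⟨w, ⟨hwT, hwL⟩, hwi⟩ := hi
    rcases w with a | j
    · simp at hwL
    · simp only [Sum.elim_inr, id_eq] at hwi
      exact hwi ▸ hwT
  have cardP : P.card = Tr.card := by
    apply Finset.card_image_of_injOn
    intro a ha b hb hab
    simp only [hTr, Finset.mem_filter] at ha hb
    rcases a with a | i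
    · simp at ha
    · rcases b with b | j
      · simp at hb
      · exact congrArg Sum.inr hab
  have hPle : P.card ≤ 2 := by
    apply cyc5_bound
    intro i hi j hj hc
    exact hTiff _ (memP i hi) _ (memP j hj)
      ((repl_adj_rr G1 x1 v1 v2 x2 i j).mpr hc)
  rcases Nat.lt_or_ge Tr.card 2 with hTr1 | hTr2
  · have := le_alphaNum G1 S0 hS0indep
    omega
  · have hTr2' : Tr.card = 2 := le_antisymm (cardP ▸ hPle) hTr2
    have hPc : P.card = 2 := by omega
    obtain ⟨i, j, hij, hPij⟩ := Finset.card_eq_two.mp hPc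
    have hiP : i ∈ P := by rw [hPij]; simp
    have hjP : j ∈ P := by rw [hPij]; simp
    -- x1 ∉ S0 ∨ x2 ∉ S0
    have hkey : x1 ∉ S0 ∨ x2 ∉ S0 := by
      by_contra hc
      push_neg at hc
      obtain ⟨hx1, hx2⟩ := hc
      obtain ⟨a, ha, haT⟩ := memS0 x1 hx1
      obtain ⟨b, hb, hbT⟩ := memS0 x2 hx2
      have h03 : ∀ k ∈ P, k ≠ 0 ∧ k ≠ 3 ∧ k ≠ 4 := by
        intro k hk
        have h1 := hTiff _ haT _ (memP k hk)
        have h2 := hTiff _ hbT _ (memP k hk)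
        rw [repl_adj_lr] at h1 h2
        refine ⟨?_, ?_, ?_⟩
        · rintro rfl; exact h1 (Or.inl ⟨ha, Or.inl rfl⟩)
        · rintro rfl; exact h1 (Or.inl ⟨ha, Or.inr rfl⟩)
        · rintro rfl; exact h2 (Or.inr ⟨hb, rfl⟩)
      obtain ⟨hi0, hi3, hi4⟩ := h03 i hiP
      obtain ⟨hj0, hj3, hj4⟩ := h03 j hjP
      exact hTiff _ (memP i hiP) _ (memP j hjP)
        ((repl_adj_rr G1 x1 v1 v2 x2 i j).mpr
          (cyc5_mid i j hi0 hi3 hi4 hj0 hj3 hj4 hij))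
    rcases hkey with hx1 | hx2
    · have hins : IndepIn G1 (insert v1 S0) := by
        rw [indepIn_iff]
        intro a ha b hb hadj
        simp only [Finset.mem_insert] at ha hb
        rcases ha with rfl | ha
        · rcases hb with rfl | hb
          · exact G1.irrefl hadj
          · rcases (adj_v1 h b).mp hadj with rfl | rfl
            · exact hx1 hb
            · exact hS0v2 hb
        · rcases hb with rfl | hb
          · rcases (adj_v1 h a).mp hadj.symm with rfl | rfl
            · exact hx1 ha
            · exact hS0v2 ha
          · exact (indepIn_iff _ _).mp hS0indep a ha b hb hadj
      have := le_alphaNum G1 _ hins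
      rw [Finset.card_insert_of_notMem hS0v1] at this
      omega
    · have hins : IndepIn G1 (insert v2 S0) := by
        rw [indepIn_iff]
        intro a ha b hb hadj
        simp only [Finset.mem_insert] at ha hb
        rcases ha with rfl | ha
        · rcases hb with rfl | hb
          · exact G1.irrefl hadj
          · rcases (adj_v2 h b).mp hadj with rfl | rfl
            · exact hS0v1 hb
            · exact hx2 hb
        · rcases hb with rfl | hb
          · rcases (adj_v2 h a).mp hadj.symm with rfl | rfl
            · exact hS0v1 ha
            · exact hx2 ha
          · exact (indepIn_iff _ _).mp hS0indep a ha b hb hadj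
      have := le_alphaNum G1 _ hins
      rw [Finset.card_insert_of_notMem hS0v2] at this
      omega

end Repl3

theorem stmt9_aux : ∀ {V : Type} (G : SimpleGraph V), InClassG G → Finite V →
    (3 * alphaNum G = Nat.card V + 1 ∧ Nat.card V % 3 = 2) := by
  intro V G hG
  induction hG with
  | p2 G hne =>
    intro hfin
    obtain ⟨e⟩ := hne
    have hc : Nat.card _ = 2 := Nat.card_congr e.toEquiv |>.trans (by simp)
    rw [alphaNum_congr e, alpha_p2, hc]
    exact ⟨rfl, rfl⟩
  | c5 G hne =>
    intro hfin
    obtain ⟨e⟩ := hne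
    have hc : Nat.card _ = 5 := Nat.card_congr e.toEquiv |>.trans (by simp)
    rw [alphaNum_congr e, alpha_c5, hc]
    exact ⟨rfl, rfl⟩
  | repl G1 G x1 v1 v2 x2 hG1 hpath hne ih =>
    intro hfin
    obtain ⟨e⟩ := hne
    have h12 : v1 ≠ v2 := by
      have := hpath.1; simp at this; tauto
    haveI hsum : Finite ({u // u ≠ v1 ∧ u ≠ v2} ⊕ Fin 5) := Finite.of_equiv _ e.toEquiv
    haveI hsub : Finite {u // u ≠ v1 ∧ u ≠ v2} :=
      Finite.of_injective (fun a : {u // u ≠ v1 ∧ u ≠ v2} =>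
        (Sum.inl a : {u // u ≠ v1 ∧ u ≠ v2} ⊕ Fin 5)) Sum.inl_injective
    haveI hU : Finite _ := Finite.of_equiv _ (replEquiv v1 v2 h12).symm
    obtain ⟨hA, hn⟩ := ih hU
    have hα : alphaNum G = alphaNum G1 + 1 := by
      rw [alphaNum_congr e]
      exact le_antisymm (repl_upper hpath) (repl_lower hpath)
    have hc := (Nat.card_congr e.toEquiv).trans (card_repl v1 v2 h12)
    rw [hα, hc]
    omega


/-- Every `n`-vertex graph in the class 𝒢 satisfies `α(G) = (n+1)/3`;
in particular `n ≡ 2 (mod 3)`. -/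
theorem stmt9 {V : Type} [Finite V] (G : SimpleGraph V) (hG : InClassG G) :
    3 * alphaNum G = Nat.card V + 1 ∧ Nat.card V % 3 = 2 :=
  stmt9_aux G hG ‹_›
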